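/- Let a, n be positive integers with n ≥ 5 and a ≤ n/2, and let e₁, …, e_a be pairwise disjoint 2-element subsets of {1,…,n}. If U is chosen uniformly at random among subsets of {1,…,n} of cardinality ⌊(n+3)/2⌋, then the probability that U contains at least one of the pairs e₁, …, e_a is at least 2a/n, with equality if and only if a = n/2. -/

import Mathlib

open Finset Pointwise

lemma count_sup {n : ℕ} (k : ℕ) (t : Finset (Fin n)) (htk : t.card ≤ k) :
    ((univ : Finset (Finset (Fin n))).filter (fun U => U.card = k ∧ t ⊆ U)).card
      = (n - t.card).choose (k - t.card) := by
  have h1 : (tᶜ : Finset (Fin n)).card = n - t.card := by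
    rw [card_compl, Fintype.card_fin]
  rw [← h1, ← Finset.card_powersetCard]
  apply card_bij' (i := fun U (_ : U ∈ _) => U \ t) (j := fun V (_ : V ∈ _) => V ∪ t)
  · intro U hU
    simp only [mem_filter, mem_univ, true_and] at hU
    rw [mem_powersetCard]
    refine ⟨fun x hx => ?_, ?_⟩
    · rw [mem_sdiff] at hx; rw [mem_compl]; exact hx.2
    · rw [card_sdiff_of_subset hU.2, hU.1]
  · intro V hV
    rw [mem_powersetCard] at hV
    have hd : Disjoint V t := by
      rw [disjoint_left]
      intro x hxV hxt
      have := hV.1 hxV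
      rw [mem_compl] at this
      exact this hxt
    simp only [mem_filter, mem_univ, true_and]
    refine ⟨?_, subset_union_right⟩
    rw [card_union_of_disjoint hd, hV.2]
    omega
  · intro U hU
    simp only [mem_filter, mem_univ, true_and] at hU
    exact sdiff_union_of_subset hU.2
  · intro V hV
    rw [mem_powersetCard] at hV
    apply union_sdiff_cancel_right
    rw [disjoint_left]
    intro x hxV hxt
    have := hV.1 hxV
    rw [mem_compl] at this
    exact this hxt

lemma S_card {n : ℕ} (k : ℕ) :
    ((univ : Finset (Finset (Fin n))).filter (fun U => U.card = k)).card = n.choose k := by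
  rw [← Finset.powerset_univ, ← Finset.powersetCard_eq_filter, Finset.card_powersetCard,
    card_univ, Fintype.card_fin]

lemma choose_id2 (N2 K2 : ℕ) :
    (K2+2)*(K2+1)*Nat.choose (N2+2) (K2+2) = (N2+2)*(N2+1)*Nat.choose N2 K2 := by
  have h1 := Nat.add_one_mul_choose_eq (N2+1) (K2+1)
  have h2 := Nat.add_one_mul_choose_eq N2 K2
  zify at h1 h2 ⊢
  linear_combination (-(K2:ℤ)-1) * h1 - ((N2:ℤ)+2) * h2

lemma star_ineq (k4 m a1 : ℕ) (hm1 : k4+1 ≤ m) (hm2 : m ≤ k4+2) (ham : a1 + 1 ≤ m) :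
    2*(k4+3+m)*((k4+2+m)*(k4+1+m) + a1*((k4+2)*(k4+1)))
      < (k4+4)*(k4+3)*((k4+2+m)*(k4+1+m)) := by
  obtain rfl | rfl : m = k4+1 ∨ m = k4+2 := by omega
  · have h : a1 * (4*k4^3+20*k4^2+32*k4+16) ≤ k4 * (4*k4^3+20*k4^2+32*k4+16) :=
      Nat.mul_le_mul_right _ (by omega)
    nlinarith [h]
  · have h : a1 * (4*k4^3+22*k4^2+38*k4+20) ≤ (k4+1) * (4*k4^3+22*k4^2+38*k4+20) :=
      Nat.mul_le_mul_right _ (by omega)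
    nlinarith [h]

lemma key_ineq (k4 m a : ℕ) (hm1 : k4+1 ≤ m) (hm2 : m ≤ k4+2) (ha1 : 1 ≤ a) (ham : a ≤ m) :
    2*a*((k4+4+m).choose (k4+4)) *
        (a * ((k4+2+m).choose (k4+2)) + a*(a-1) * ((k4+m).choose k4))
      < (k4+4+m) * (a * ((k4+2+m).choose (k4+2)))^2 := by
  obtain ⟨a1, rfl⟩ : ∃ a1, a = a1 + 1 := ⟨a - 1, by omega⟩
  have A := choose_id2 (k4+2+m) (k4+2)
  have B := choose_id2 (k4+m) k4
  rw [show k4+2+m+2 = k4+4+m by omega] at A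
  rw [show k4+m+2 = k4+2+m by omega] at B
  have c2pos : 0 < (k4+2+m).choose (k4+2) := Nat.choose_pos (by omega)
  have c4pos : 0 < (k4+m).choose k4 := Nat.choose_pos (by omega)
  have star := star_ineq k4 m a1 hm1 hm2 ham
  simp only [Nat.add_sub_cancel]
  set c0 := (k4+4+m).choose (k4+4)
  set c2 := (k4+2+m).choose (k4+2)
  set c4 := (k4+m).choose k4
  have hK : (0:ℤ) < ((k4:ℤ)+4)*((k4:ℤ)+3)*(((k4:ℤ)+2)*((k4:ℤ)+1)) := by positivity
  zify at A B star c2pos c4pos ⊢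
  set a : ℤ := (a1:ℤ) + 1 with ha_def
  refine lt_of_mul_lt_mul_right ?_ (le_of_lt hK)
  have e1 : (2*a*(c0:ℤ)*(a*c2 + a*a1*c4)) * (((k4:ℤ)+4)*((k4:ℤ)+3)*(((k4:ℤ)+2)*((k4:ℤ)+1)))
      = (2*((k4:ℤ)+3+m)*(((k4:ℤ)+2+m)*((k4:ℤ)+1+m) + a1*(((k4:ℤ)+2)*((k4:ℤ)+1))))
        * (a^2*((k4:ℤ)+4+m)*c2*c4) := by
    linear_combination (2*a*(a*(c2:ℤ) + a*a1*c4)*(((k4:ℤ)+2)*((k4:ℤ)+1))) * A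
      + (2*a^2*((k4:ℤ)+4+m)*((k4:ℤ)+3+m)*c2) * B
  have e2 : (((k4:ℤ)+4+m) * (a*c2)^2) * (((k4:ℤ)+4)*((k4:ℤ)+3)*(((k4:ℤ)+2)*((k4:ℤ)+1)))
      = (((k4:ℤ)+4)*((k4:ℤ)+3)*(((k4:ℤ)+2+m)*((k4:ℤ)+1+m))) * (a^2*((k4:ℤ)+4+m)*c2*c4) := by
    linear_combination (a^2*((k4:ℤ)+4+m)*((k4:ℤ)+4)*((k4:ℤ)+3)*c2) * B
  rw [e1, e2]
  have hpos : (0:ℤ) < a^2*((k4:ℤ)+4+m)*c2*c4 := by positivity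
  exact mul_lt_mul_of_pos_right star hpos

theorem stmt6 (n a : ℕ) (hn : 5 ≤ n) (ha : 1 ≤ a) (han : 2 * a ≤ n)
    (e : Fin a → Finset (Fin n)) (hcard : ∀ i, (e i).card = 2)
    (hdisj : ∀ i j, i ≠ j → Disjoint (e i) (e j)) :
    2 * a * ((univ : Finset (Finset (Fin n))).filter
        (fun U => U.card = (n + 3) / 2)).card ≤
      n * ((univ : Finset (Finset (Fin n))).filter
        (fun U => U.card = (n + 3) / 2 ∧ ∃ i, e i ⊆ U)).card ∧
    (2 * a * ((univ : Finset (Finset (Fin n))).filter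
        (fun U => U.card = (n + 3) / 2)).card =
      n * ((univ : Finset (Finset (Fin n))).filter
        (fun U => U.card = (n + 3) / 2 ∧ ∃ i, e i ⊆ U)).card ↔ 2 * a = n) := by
  have hk1 : n + 2 ≤ 2 * ((n + 3) / 2) := by omega
  have hk2 : 2 * ((n + 3) / 2) ≤ n + 3 := by omega
  set k := (n + 3) / 2 with hkdef
  have hk4 : 4 ≤ k := by omega
  have hkn : k ≤ n := by omega
  set S := (univ : Finset (Finset (Fin n))).filter (fun U => U.card = k) with hSdef
  set G := (univ : Finset (Finset (Fin n))).filter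
      (fun U => U.card = k ∧ ∃ i, e i ⊆ U) with hGdef
  have hGS : G ⊆ S := by
    intro U hU
    rw [hGdef, mem_filter] at hU
    rw [hSdef, mem_filter]
    exact ⟨hU.1, hU.2.1⟩
  have hNS : S.card = n.choose k := S_card k
  have hNpos : 0 < S.card := by rw [hNS]; exact Nat.choose_pos hkn
  by_cases hcase : n - k < a
  · -- every k-set contains some pair
    have hGeq : G = S := by
      apply Finset.Subset.antisymm hGS
      intro U hU
      simp only [hSdef, hGdef, mem_filter, mem_univ, true_and] at hU ⊢
      refine ⟨hU, ?_⟩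
      by_contra hcon
      push_neg at hcon
      have hne : ∀ i, ((e i) ∩ Uᶜ).Nonempty := by
        intro i
        obtain ⟨x, hx1, hx2⟩ := Finset.not_subset.mp (hcon i)
        exact ⟨x, mem_inter.mpr ⟨hx1, mem_compl.mpr hx2⟩⟩
      have hle : a ≤ (Uᶜ).card := by
        have hdisj2 : ∀ i ∈ (univ : Finset (Fin a)), ∀ j ∈ univ, i ≠ j →
            Disjoint (e i ∩ Uᶜ) (e j ∩ Uᶜ) := fun i _ j _ hij =>
          (hdisj i j hij).mono inter_subset_left inter_subset_left
        calc a = ∑ _i : Fin a, 1 := by simp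
        _ ≤ ∑ i : Fin a, ((e i) ∩ Uᶜ).card :=
            Finset.sum_le_sum fun i _ => (hne i).card_pos
        _ = ((univ : Finset (Fin a)).biUnion fun i => e i ∩ Uᶜ).card :=
            (Finset.card_biUnion hdisj2).symm
        _ ≤ (Uᶜ).card := card_le_card (by
            intro x hx
            rw [mem_biUnion] at hx
            obtain ⟨i, _, hxi⟩ := hx
            exact (mem_inter.mp hxi).2)
      rw [card_compl, Fintype.card_fin, hU] at hle
      omega
    rw [hGeq]
    refine ⟨Nat.mul_le_mul_right _ han, ?_, fun h => by rw [h]⟩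
    intro h
    exact Nat.eq_of_mul_eq_mul_right hNpos h
  · push_neg at hcase
    have h2an : 2 * a ≤ n - 2 := by omega
    set f : Finset (Fin n) → ℕ :=
      fun U => ((univ : Finset (Fin a)).filter (fun i => e i ⊆ U)).card with hfdef
    set c2 := (n-2).choose (k-2) with hc2def
    set c4 := (n-4).choose (k-4) with hc4def
    have hc2 : ∀ i : Fin a,
        ((univ : Finset (Finset (Fin n))).filter (fun U => U.card = k ∧ e i ⊆ U)).card = c2 := by
      intro i
      rw [count_sup k (e i) (by rw [hcard]; omega), hcard]
    have hc4 : ∀ i j : Fin a, i ≠ j →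
        ((univ : Finset (Finset (Fin n))).filter
          (fun U => U.card = k ∧ e i ∪ e j ⊆ U)).card = c4 := by
      intro i j hij
      have hu : (e i ∪ e j).card = 4 := by
        rw [card_union_of_disjoint (hdisj i j hij), hcard, hcard]
      rw [count_sup k (e i ∪ e j) (by rw [hu]; omega), hu]
    have hT1 : ∑ U ∈ S, f U = a * c2 := by
      calc ∑ U ∈ S, f U
          = ∑ i : Fin a, ((univ : Finset (Finset (Fin n))).filter
              (fun U => U.card = k ∧ e i ⊆ U)).card := by
            simp only [hfdef, hSdef, card_filter]
            rw [Finset.sum_comm]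
            refine Finset.sum_congr rfl fun i _ => ?_
            rw [Finset.sum_filter]
            refine Finset.sum_congr rfl fun U _ => ?_
            by_cases h1 : U.card = k <;> by_cases h2 : e i ⊆ U <;> simp [h1, h2]
        _ = ∑ _i : Fin a, c2 := Finset.sum_congr rfl fun i _ => hc2 i
        _ = a * c2 := by rw [Finset.sum_const, card_univ, Fintype.card_fin, smul_eq_mul]
    have hT2 : ∑ U ∈ S, (f U)^2 = a * c2 + a*(a-1)*c4 := by
      calc ∑ U ∈ S, (f U)^2
          = ∑ U ∈ S, ∑ i : Fin a, ∑ j : Fin a, (if e i ∪ e j ⊆ U then 1 else 0) := by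
            refine Finset.sum_congr rfl fun U _ => ?_
            rw [hfdef]
            simp only [card_filter, sq]
            rw [Finset.sum_mul_sum]
            refine Finset.sum_congr rfl fun i _ => Finset.sum_congr rfl fun j _ => ?_
            by_cases h1 : e i ⊆ U <;> by_cases h2 : e j ⊆ U <;>
              simp [h1, h2, Finset.union_subset_iff]
        _ = ∑ i : Fin a, ∑ j : Fin a, ((univ : Finset (Finset (Fin n))).filter
              (fun U => U.card = k ∧ e i ∪ e j ⊆ U)).card := by
            rw [Finset.sum_comm]
            refine Finset.sum_congr rfl fun i _ => ?_
            rw [Finset.sum_comm]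
            refine Finset.sum_congr rfl fun j _ => ?_
            rw [hSdef, card_filter, Finset.sum_filter]
            refine Finset.sum_congr rfl fun U _ => ?_
            by_cases h1 : U.card = k <;> by_cases h2 : e i ∪ e j ⊆ U <;> simp [h1, h2]
        _ = ∑ i : Fin a, ∑ j : Fin a, (if i = j then c2 else c4) := by
            refine Finset.sum_congr rfl fun i _ => Finset.sum_congr rfl fun j _ => ?_
            by_cases hij : i = j
            · subst hij
              simp only [if_pos rfl, union_self]
              exact hc2 i
            · rw [if_neg hij]
              exact hc4 i j hij
        _ = ∑ _i : Fin a, (c2 + (a-1)*c4) := by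
            refine Finset.sum_congr rfl fun i _ => ?_
            rw [← Finset.add_sum_erase _ _ (mem_univ i), if_pos rfl]
            congr 1
            calc ∑ j ∈ univ.erase i, (if i = j then c2 else c4)
                = ∑ _j ∈ univ.erase i, c4 := by
                  refine Finset.sum_congr rfl fun j hj => ?_
                  exact if_neg (fun h => (Finset.mem_erase.mp hj).1 h.symm)
              _ = (a-1)*c4 := by
                  rw [Finset.sum_const, Finset.card_erase_of_mem (mem_univ i),
                    card_univ, Fintype.card_fin, smul_eq_mul]
        _ = a * c2 + a*(a-1)*c4 := by
            rw [Finset.sum_const, card_univ, Fintype.card_fin, smul_eq_mul]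
            ring
    have hfG : ∀ U ∈ S, U ∉ G → f U = 0 := by
      intro U hUS hUG
      rw [hSdef, mem_filter] at hUS
      rw [hGdef, mem_filter] at hUG
      rw [hfdef]
      simp only [Finset.card_eq_zero, Finset.filter_eq_empty_iff]
      intro i _
      intro hsub
      exact hUG ⟨hUS.1, hUS.2, ⟨i, hsub⟩⟩
    have hsubG : ∑ U ∈ G, f U = a * c2 := by
      rw [← hT1]
      exact Finset.sum_subset hGS hfG
    have hCS : (a*c2)^2 ≤ G.card * ∑ U ∈ G, (f U)^2 := by
      rw [← hsubG]
      have := sq_sum_le_card_mul_sum_sq (s := G) (f := f)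
      simpa using this
    have hCS2 : (a*c2)^2 ≤ G.card * (a * c2 + a*(a-1)*c4) := by
      refine le_trans hCS (Nat.mul_le_mul_left _ ?_)
      rw [← hT2]
      exact Finset.sum_le_sum_of_subset hGS
    have hkey : 2*a*(n.choose k) * (a*c2 + a*(a-1)*c4) < n * (a*c2)^2 := by
      have h := key_ineq (k-4) (n-k) a (by omega) (by omega) ha hcase
      rw [show k-4+4+(n-k) = n by omega, show k-4+4 = k by omega,
          show k-4+2+(n-k) = n-2 by omega, show k-4+2 = k-2 by omega,
          show k-4+(n-k) = n-4 by omega] at h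
      exact h
    have hT2pos : 0 < a * c2 + a*(a-1)*c4 := by
      have hc2p : 0 < c2 := Nat.choose_pos (by omega)
      have := Nat.mul_pos ha hc2p
      omega
    have hmain : 2*a*S.card < n * G.card := by
      have h1 : 2*a*S.card * (a*c2 + a*(a-1)*c4) < n * (a*c2)^2 := by
        rw [hNS]; exact hkey
      have h2 : n * (a*c2)^2 ≤ n * G.card * (a * c2 + a*(a-1)*c4) := by
        calc n * (a*c2)^2 ≤ n * (G.card * (a * c2 + a*(a-1)*c4)) :=
              Nat.mul_le_mul_left _ hCS2
          _ = n * G.card * (a * c2 + a*(a-1)*c4) := by ring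
      exact lt_of_mul_lt_mul_right (lt_of_lt_of_le h1 h2) (Nat.zero_le _)
    refine ⟨le_of_lt hmain, ?_, ?_⟩
    · intro h; omega
    · intro h; omega
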